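/- The spectral measure of the adjacency operator T of ℤ_{>0} at the vector δ_1 is the semicircle distribution ρ_sc with density (1/2π)√(4 - x²) on [-2, 2]; equivalently, ⟨T^k δ_1, δ_1⟩ = ∫_{-2}^{2} x^k (1/2π)√(4 - x²) dx for all k ≥ 0. -/

import Mathlib

open Nat Real intervalIntegral


def g (k n : ℕ) : ℤ :=
  if n ≤ k ∧ (k + n) % 2 = 0 then
    (Nat.choose k ((k - n) / 2) : ℤ) - Nat.choose k ((k + n) / 2 + 1) else 0

lemma g_zero (n : ℕ) : g 0 n = if n = 0 then 1 else 0 := by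
  rcases n with _ | m
  · simp [g]
  · rw [g, if_neg (by omega)]; simp

lemma g_succ (k n : ℕ) :
    g (k+1) n = (if n = 0 then 0 else g k (n-1)) + g k (n+1) := by
  by_cases h2 : (k + 1 + n) % 2 = 0
  · rcases n with _ | m
    · -- n = 0, k odd
      obtain ⟨a, rfl⟩ : ∃ a, k = 2*a + 1 := ⟨k/2, by omega⟩
      rw [if_pos rfl, g, g, if_pos (by omega), if_pos (by omega)]
      have e1 : (2*a+1+1 - 0)/2 = a + 1 := by omega
      have e2 : (2*a+1+1 + 0)/2 + 1 = a + 2 := by omega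
      have e3 : (2*a+1 - 1)/2 = a := by omega
      rw [e1, e2, e3]
      have P1 : ((2*a+1+1).choose (a+1) : ℤ)
          = (2*a+1).choose a + (2*a+1).choose (a+1) := by
        exact_mod_cast Nat.choose_succ_succ' (2*a+1) a
      have P2 : ((2*a+1+1).choose (a+2) : ℤ)
          = (2*a+1).choose (a+1) + (2*a+1).choose (a+2) := by
        have := Nat.choose_succ_succ' (2*a+1) (a+1)
        rw [(by omega : a+1+1 = a+2)] at this
        exact_mod_cast this
      rw [P1, P2]; ring
    · rw [if_neg (by omega)]
      rcases lt_trichotomy (m+1) k with h | h | h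
      · -- interior
        obtain ⟨c, rfl, hc1⟩ : ∃ c, k = m + 2*c ∧ 1 ≤ c := ⟨(k-m)/2, by omega, by omega⟩
        obtain ⟨c, rfl⟩ : ∃ c', c = c' + 1 := ⟨c-1, by omega⟩
        rw [g, g, g, if_pos (by omega), if_pos (by omega), if_pos (by omega)]
        have e1 : (m + 2*(c+1) + 1 - (m+1))/2 = c + 1 := by omega
        have e2 : (m + 2*(c+1) + 1 + (m+1))/2 + 1 = m + c + 3 := by omega
        have e3 : (m + 2*(c+1) - (m+1-1))/2 = c + 1 := by omega
        have e4 : (m + 2*(c+1) + (m+1-1))/2 + 1 = m + c + 2 := by omega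
        have e5 : (m + 2*(c+1) - (m+1+1))/2 = c := by omega
        have e6 : (m + 2*(c+1) + (m+1+1))/2 + 1 = m + c + 3 := by omega
        rw [e1, e2, e3, e4, e5, e6]
        have P1 : ((m+2*(c+1)+1).choose (c+1) : ℤ)
            = (m+2*(c+1)).choose c + (m+2*(c+1)).choose (c+1) := by
          exact_mod_cast Nat.choose_succ_succ' (m+2*(c+1)) c
        have P2 : ((m+2*(c+1)+1).choose (m+c+3) : ℤ)
            = (m+2*(c+1)).choose (m+c+2) + (m+2*(c+1)).choose (m+c+3) := by
          have := Nat.choose_succ_succ' (m+2*(c+1)) (m+c+2)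
          rw [(by omega : m+c+2+1 = m+c+3)] at this
          exact_mod_cast this
        rw [P1, P2]; ring
      · -- m+1 = k impossible by parity
        omega
      · rcases Nat.lt_or_ge (m+1) (k+2) with h' | h'
        · -- m + 1 = k + 1
          obtain rfl : k = m := by omega
          rw [g, g, g, if_pos (by omega), if_pos (by omega), if_neg (by omega)]
          have e1 : (k + 1 - (k+1))/2 = 0 := by omega
          have e2 : (k + 1 + (k+1))/2 + 1 = k + 2 := by omega
          have e3 : (k - (k+1-1))/2 = 0 := by omega
          have e4 : (k + (k+1-1))/2 + 1 = k + 1 := by omega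
          rw [e1, e2, e3, e4]
          rw [Nat.choose_eq_zero_of_lt (show k+1 < k+2 by omega),
              Nat.choose_eq_zero_of_lt (show k < k+1 by omega)]
          simp
        · -- m + 1 ≥ k + 2 : everything 0
          rw [g, g, g, if_neg (by omega), if_neg (by omega), if_neg (by omega)]
          ring
  · -- parity mismatch: all zero
    rw [g, if_neg (by omega)]
    rcases n with _ | m
    · rw [if_pos rfl, g, if_neg (by omega)]; ring
    · rw [if_neg (by omega), g, g, if_neg (by omega), if_neg (by omega)]; ring

lemma g_col0 (k : ℕ) : g k 0 = if k % 2 = 0 then (catalan (k/2) : ℤ) else 0 := by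
  by_cases hk : k % 2 = 0
  · obtain ⟨m, rfl⟩ : ∃ m, k = 2*m := ⟨k/2, by omega⟩
    rw [g, if_pos (by omega), if_pos (by omega)]
    have e1 : (2*m - 0)/2 = m := by omega
    have e2 : (2*m + 0)/2 = m := by omega
    have e3 : (2*m)/2 = m := by omega
    rw [e1, e2, e3]
    have h1 : (Nat.choose (2*m) (m+1)) * (m+1) = Nat.choose (2*m) m * (2*m - m) :=
      Nat.choose_succ_right_eq (2*m) m
    rw [show 2*m - m = m by omega] at h1
    have h2 : (m + 1) * catalan m = m.centralBinom := succ_mul_catalan_eq_centralBinom m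
    have h3 : m.centralBinom = Nat.choose (2*m) m := rfl
    have h1' : ((Nat.choose (2*m) (m+1) : ℤ)) * (m+1) = (Nat.choose (2*m) m : ℤ) * m := by
      exact_mod_cast h1
    have h2' : ((m : ℤ) + 1) * catalan m = (Nat.choose (2*m) m : ℤ) := by
      rw [h3] at h2; exact_mod_cast h2
    have hm1 : ((m : ℤ) + 1) ≠ 0 := by positivity
    apply mul_left_cancel₀ hm1
    linear_combination -h1' - h2'
  · rw [g, if_neg (by omega), if_neg hk]

lemma Tpow (T : lp (fun _ : ℕ => ℂ) 2 →L[ℂ] lp (fun _ : ℕ => ℂ) 2)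
    (hT : ∀ ψ : lp (fun _ : ℕ => ℂ) 2, ∀ n : ℕ,
      (T ψ : ∀ _ : ℕ, ℂ) n =
        (if n = 0 then 0 else (ψ : ∀ _ : ℕ, ℂ) (n - 1)) + (ψ : ∀ _ : ℕ, ℂ) (n + 1)) :
    ∀ k n : ℕ, ((T ^ k) (lp.single 2 0 1) : ∀ _ : ℕ, ℂ) n = (g k n : ℂ) := by
  intro k
  induction k with
  | zero =>
    intro n
    rw [pow_zero, ContinuousLinearMap.one_apply, g_zero]
    rcases eq_or_ne n 0 with rfl | hn
    · rw [lp.single_apply_self]; simp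
    · rw [lp.single_apply_ne 2 0 _ hn]; simp [hn]
  | succ k ih =>
    intro n
    rw [show T^(k+1) = T * T^k from pow_succ' T k, ContinuousLinearMap.mul_apply, hT, g_succ]
    rw [ih, ih]
    push_cast
    rfl

noncomputable def II (k : ℕ) : ℝ := ∫ x in (-2:ℝ)..2, x ^ k * Real.sqrt (4 - x ^ 2)

lemma contI (k : ℕ) : Continuous (fun x : ℝ => x ^ k * Real.sqrt (4 - x ^ 2)) := by
  apply Continuous.mul (continuous_pow k)
  exact Real.continuous_sqrt.comp (by continuity)

lemma intI (k : ℕ) : IntervalIntegrable (fun x : ℝ => x ^ k * Real.sqrt (4 - x ^ 2))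
    MeasureTheory.volume (-2) 2 := (contI k).intervalIntegrable _ _

lemma sqrt4 : Real.sqrt 4 = 2 := by
  rw [show (4:ℝ) = 2^2 by norm_num, Real.sqrt_sq (by norm_num)]

lemma I_zero : II 0 = 2 * Real.pi := by
  have h := intervalIntegral.integral_comp_mul_left
    (f := fun x : ℝ => Real.sqrt (4 - x^2)) (a := -1) (b := 1) (c := 2)
    (show (2:ℝ) ≠ 0 by norm_num)
  have h2 : (∫ x in (-1:ℝ)..1, Real.sqrt (4 - (2*x)^2)) = π := by
    have : ∀ x : ℝ, Real.sqrt (4 - (2*x)^2) = 2 * Real.sqrt (1 - x^2) := by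
      intro x
      rw [show (4 - (2*x)^2 : ℝ) = 4 * (1 - x^2) by ring, Real.sqrt_mul (by norm_num), sqrt4]
    rw [intervalIntegral.integral_congr (fun x _ => this x),
      intervalIntegral.integral_const_mul, integral_sqrt_one_sub_sq]
    ring
  rw [h2] at h
  have : (2:ℝ) * (-1) = -2 := by norm_num
  rw [this, show (2:ℝ) * 1 = 2 by norm_num, smul_eq_mul] at h
  have : (∫ x in (-2:ℝ)..2, Real.sqrt (4 - x^2)) = 2 * π := by
    field_simp at h; linarith
  simpa [II] using this

lemma I_odd (k : ℕ) (hk : k % 2 = 1) : II k = 0 := by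
  have h := intervalIntegral.integral_comp_neg
    (f := fun x : ℝ => x ^ k * Real.sqrt (4 - x ^ 2)) (a := -2) (b := 2)
  have hodd : ∀ x : ℝ, (-x) ^ k * Real.sqrt (4 - (-x) ^ 2)
      = -(x ^ k * Real.sqrt (4 - x ^ 2)) := by
    intro x
    obtain ⟨m, rfl⟩ : ∃ m, k = 2*m+1 := ⟨k/2, by omega⟩
    rw [show ((-x)^2 : ℝ) = x^2 by ring, Odd.neg_pow ⟨m, by ring⟩ x]
    ring
  rw [intervalIntegral.integral_congr (fun x _ => hodd x), intervalIntegral.integral_neg,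
    neg_neg] at h
  have : -II k = II k := by simpa [II] using h
  linarith

lemma rpow32 (a : ℝ) (ha : 0 ≤ a) : a ^ (3/2 : ℝ) = a * Real.sqrt a := by
  rw [show (3/2 : ℝ) = (1/2) * 3 by norm_num, Real.rpow_mul ha, ← Real.sqrt_eq_rpow,
    show ((3:ℝ)) = ((3:ℕ):ℝ) by norm_num, Real.rpow_natCast, pow_succ, Real.sq_sqrt ha]


lemma I_rec (k : ℕ) : ((k:ℝ)+4) * II (k+2) = 4*((k:ℝ)+1) * II k := by
  set F : ℝ → ℝ := fun x => x^(k+1) * (4 - x^2) ^ (3/2 : ℝ) with hF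
  have hder : ∀ x ∈ Set.uIcc (-2:ℝ) 2, HasDerivAt F
      (4*((k:ℝ)+1) * (x^k * Real.sqrt (4-x^2))
        - ((k:ℝ)+4) * (x^(k+2) * Real.sqrt (4-x^2))) x := by
    intro x hx
    have hx4 : (0:ℝ) ≤ 4 - x^2 := by
      rw [Set.uIcc_of_le (by norm_num)] at hx
      obtain ⟨h1, h2⟩ := hx
      nlinarith
    have h1 : HasDerivAt (fun x : ℝ => 4 - x^2) (-(2*x)) x := by
      simpa using (hasDerivAt_pow 2 x).const_sub 4
    have h2 : HasDerivAt (fun y : ℝ => y ^ (3/2:ℝ))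
        ((3/2) * (4-x^2) ^ ((3/2:ℝ) - 1)) (4 - x^2) :=
      Real.hasDerivAt_rpow_const (Or.inr (by norm_num))
    have h3 : HasDerivAt (fun x : ℝ => (4 - x^2) ^ (3/2:ℝ))
        (((3/2) * (4-x^2) ^ ((3/2:ℝ)-1)) * (-(2*x))) x := by
        have := h2.comp x h1; exact this
    have h4 : HasDerivAt (fun x : ℝ => x^(k+1)) (((k:ℝ)+1) * x^k) x := by
      simpa using hasDerivAt_pow (k+1) x
    have h5 := h4.mul h3
    have h6 : HasDerivAt F (((k:ℝ)+1) * x^k * ((4-x^2) ^ (3/2:ℝ))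
        + x^(k+1) * (((3/2) * (4-x^2) ^ ((3/2:ℝ)-1)) * (-(2*x)))) x := h5
    convert h6 using 1
    rw [show ((3/2:ℝ) - 1) = 1/2 by norm_num, ← Real.sqrt_eq_rpow, rpow32 _ hx4]
    ring
  have hint : IntervalIntegrable
      (fun x : ℝ => 4*((k:ℝ)+1) * (x^k * Real.sqrt (4-x^2))
        - ((k:ℝ)+4) * (x^(k+2) * Real.sqrt (4-x^2))) MeasureTheory.volume (-2) 2 :=
    ((intI k).const_mul _).sub ((intI (k+2)).const_mul _)
  have hFTC := intervalIntegral.integral_eq_sub_of_hasDerivAt hder hint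
  have hF2 : F 2 = 0 := by
    rw [hF]; norm_num
  have hFm2 : F (-2) = 0 := by
    rw [hF]; norm_num
  rw [hF2, hFm2, intervalIntegral.integral_sub ((intI k).const_mul _)
      ((intI (k+2)).const_mul _), intervalIntegral.integral_const_mul,
      intervalIntegral.integral_const_mul] at hFTC
  have : 4*((k:ℝ)+1) * II k - ((k:ℝ)+4) * II (k+2) = 0 := by
    simpa [II] using hFTC
  linarith

lemma I_even (m : ℕ) : II (2*m) = 2 * π * catalan m := by
  induction m with
  | zero => simpa [catalan_zero] using I_zero
  | succ m ih =>
    have hrec := I_rec (2*m)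
    rw [ih] at hrec
    have hcat : (m+1+1) * catalan (m+1) = 2 * (2*m+1) * catalan m := by
      apply Nat.eq_of_mul_eq_mul_left (show 0 < m+1 by omega)
      calc (m+1) * ((m+1+1) * catalan (m+1))
          = (m+1) * (m+1).centralBinom := by
            rw [succ_mul_catalan_eq_centralBinom]
        _ = 2 * (2*m+1) * Nat.centralBinom m := Nat.succ_mul_centralBinom_succ m
        _ = 2 * (2*m+1) * ((m+1) * catalan m) := by
            rw [succ_mul_catalan_eq_centralBinom]
        _ = (m+1) * (2 * (2*m+1) * catalan m) := by ring
    have hcat' : ((m:ℝ)+2) * catalan (m+1) = 2 * (2*(m:ℝ)+1) * catalan m := by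
      exact_mod_cast hcat
    have hne : (2*(m:ℝ)+4) ≠ 0 := by positivity
    rw [show 2*(m+1) = 2*m+2 by ring]
    apply mul_left_cancel₀ hne
    push_cast at hrec
    rw [hrec]
    linear_combination (-(4*Real.pi)) * hcat'

lemma I_eval (k : ℕ) : II k = if k % 2 = 0 then 2 * π * catalan (k/2) else 0 := by
  by_cases hk : k % 2 = 0
  · obtain ⟨m, rfl⟩ : ∃ m, k = 2*m := ⟨k/2, by omega⟩
    rw [if_pos hk, I_even, Nat.mul_div_cancel_left m (by norm_num)]
  · rw [if_neg hk, I_odd k (by omega)]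

lemma M_eval (k : ℕ) :
    (∫ x in (-2:ℝ)..2, x ^ k * (1 / (2 * π) * Real.sqrt (4 - x ^ 2)))
      = if k % 2 = 0 then (catalan (k/2) : ℝ) else 0 := by
  have h1 : (∫ x in (-2:ℝ)..2, x ^ k * (1 / (2 * π) * Real.sqrt (4 - x ^ 2)))
      = (1 / (2*π)) * II k := by
    rw [II, ← intervalIntegral.integral_const_mul]
    apply intervalIntegral.integral_congr
    intro x _
    ring
  rw [h1, I_eval]
  split_ifs with h
  · field_simp
  · simp


/-- The spectral measure of the adjacency operator of `ℤ_{>0}`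
at `δ_1` is the semicircle law: `⟨T^k δ_1, δ_1⟩ = ∫_{-2}^2 x^k (1/2π)√(4-x²) dx`
for all `k ≥ 0`. (Coordinates are indexed by `ℕ`, the index `k` standing for the
site `k+1`, so `δ_1` is `lp.single 2 0 1`.) -/
theorem adjacency_spectral_measure_semicircle
    (T : lp (fun _ : ℕ => ℂ) 2 →L[ℂ] lp (fun _ : ℕ => ℂ) 2)
    (hT : ∀ ψ : lp (fun _ : ℕ => ℂ) 2, ∀ n : ℕ,
      (T ψ : ∀ _ : ℕ, ℂ) n =
        (if n = 0 then 0 else (ψ : ∀ _ : ℕ, ℂ) (n - 1)) + (ψ : ∀ _ : ℕ, ℂ) (n + 1)) :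
    ∀ k : ℕ,
      ((T ^ k) (lp.single 2 0 1) : ∀ _ : ℕ, ℂ) 0 =
        ((∫ x in (-2 : ℝ)..2, x ^ k * (1 / (2 * Real.pi) * Real.sqrt (4 - x ^ 2))) : ℝ) := by
  intro k
  rw [Tpow T hT k 0, g_col0, M_eval k]
  split_ifs with h <;> push_cast <;> norm_num
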